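/- Let M(x) = x for all x ∈ [0,∞). The set C_∞(M, Δ_4) = { real sequences x = (x_k)_{k≥1} : there exists ρ > 0 with sup_{i≥1} (1/i) Σ_{k=1}^{i} M(|Δ_4 x_k|/ρ) < ∞ }, where Δ_4 x_k = x_k − x_{k+4}, is not symmetric: there exists a sequence x ∈ C_∞(M, Δ_4) (one may take x_k = k) and a bijection π of the positive integers such that the rearranged sequence (x_{π(k)})_{k≥1} does not belong to C_∞(M, Δ_4). -/

import Mathlib

/-!
Statement 12 (Paper: Theorem 3.3 with Example 3.2).  With `M = id`, the space
`C_∞(M, Δ_4)` is not symmetric: the sequence `x_k = k` belongs to it, but some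
rearrangement of it does not.  Sequences are indexed so that `x k` represents
the paper's `x_{k+1}`.
-/

open scoped ENNReal

/-- The generalized difference operator (`Δ_4 = delta 4 1`). -/
def delta (m : ℕ) : ℕ → (ℕ → ℝ) → ℕ → ℝ
  | 0, x => x
  | n + 1, x => fun k => delta m n x k - delta m n x (k + m)

/-- The Cesàro average `(1/i) ∑_{k=1}^{i} M (|x_k| / ρ)`, where `i` here is `i+1`. -/
noncomputable def cesTerm (M : ℝ → ℝ) (x : ℕ → ℝ) (ρ : ℝ) (i : ℕ) : ℝ :=
  (1 / (i + 1 : ℝ)) * ∑ k ∈ Finset.range (i + 1), M (|x k| / ρ)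

/-- `sup_{i ≥ 1} (1/i) ∑_{k=1}^{i} M (|x_k| / ρ)`, valued in `ℝ≥0∞`. -/
noncomputable def cesSup (M : ℝ → ℝ) (x : ℕ → ℝ) (ρ : ℝ) : ℝ≥0∞ :=
  ⨆ i : ℕ, ENNReal.ofReal (cesTerm M x ρ i)

/-- The space `C_∞(M, Δ_m^n)`. -/
def CInftyMDelta (M : ℝ → ℝ) (m n : ℕ) : Set (ℕ → ℝ) :=
  {x | ∃ ρ > 0, cesSup M (delta m n x) ρ < ⊤}

/-- A symmetric set of sequences: closed under all rearrangements. -/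
def SymmetricSet (E : Set (ℕ → ℝ)) : Prop :=
  ∀ x ∈ E, ∀ π : Equiv.Perm ℕ, (fun k => x (π k)) ∈ E

def tau (n : ℕ) : ℕ :=
  if n % 4 = 1 then 2 ^ n
  else if 2 ^ Nat.log 2 n = n ∧ Nat.log 2 n % 4 = 1 then Nat.log 2 n
  else n

lemma two_pow_mod_four (n : ℕ) (hn : 1 ≤ n) : 2 ^ n % 4 ≠ 1 := by
  intro h
  have h2 : 2 ^ n % 2 = 1 := by
    have := Nat.mod_mod_of_dvd (2 ^ n) (by norm_num : (2 : ℕ) ∣ 4)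
    omega
  have h3 : 2 ∣ 2 ^ n := dvd_pow_self 2 (by omega)
  omega

lemma tau_of_mod (n : ℕ) (hn : n % 4 = 1) : tau n = 2 ^ n := by simp [tau, hn]

lemma tau_pow (n : ℕ) (hn : n % 4 = 1) : tau (2 ^ n) = n := by
  have h1 := two_pow_mod_four n (by omega)
  have h2 : Nat.log 2 (2 ^ n) = n := Nat.log_pow (by norm_num) n
  simp only [tau]
  rw [if_neg h1, h2, if_pos ⟨rfl, hn⟩]

lemma tau_invol : Function.Involutive tau := by
  intro n
  by_cases h1 : n % 4 = 1
  · rw [tau_of_mod n h1, tau_pow n h1]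
  · by_cases h2 : 2 ^ Nat.log 2 n = n ∧ Nat.log 2 n % 4 = 1
    · have ht : tau n = Nat.log 2 n := by simp only [tau, if_neg h1, if_pos h2]
      rw [ht, tau_of_mod _ h2.2, h2.1]
    · have ht : tau n = n := by simp only [tau, if_neg h1, if_neg h2]
      rw [ht, ht]

def tauPerm : Equiv.Perm ℕ := Function.Involutive.toPerm tau tau_invol

lemma rearranged_not_mem :
    (fun k => (fun k : ℕ => (k + 1 : ℝ)) (tauPerm k)) ∉
      CInftyMDelta (fun t => t) 4 1 := by
  rintro ⟨ρ, hρ, hlt⟩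
  set y : ℕ → ℝ := fun k => ((tauPerm k : ℕ) + 1 : ℝ) with hy
  set C := (cesSup (fun t => t) (delta 4 1 y) ρ).toReal with hC
  have hterm_le : ∀ i, cesTerm (fun t => t) (delta 4 1 y) ρ i ≤ C := by
    intro i
    have hnn : 0 ≤ cesTerm (fun t => t) (delta 4 1 y) ρ i := by
      unfold cesTerm
      apply mul_nonneg (by positivity)
      exact Finset.sum_nonneg fun k _ => by positivity
    have h1 : ENNReal.ofReal (cesTerm (fun t => t) (delta 4 1 y) ρ i)
        ≤ cesSup (fun t => t) (delta 4 1 y) ρ := by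
      exact le_iSup (fun i => ENNReal.ofReal (cesTerm (fun t => t) (delta 4 1 y) ρ i)) i
    have := ENNReal.toReal_mono hlt.ne h1
    rwa [ENNReal.toReal_ofReal hnn] at this
  have key : ∀ j : ℕ, (2 : ℝ) ^ (2 * j) ≤ C * ρ := by
    intro j
    have hk1 : (4 * j + 1) % 4 = 1 := by omega
    have hk2 : (4 * j + 1 + 4) % 4 = 1 := by omega
    have htau1 : tau (4 * j + 1) = 2 ^ (4 * j + 1) := tau_of_mod _ hk1
    have htau2 : tau (4 * j + 1 + 4) = 2 ^ (4 * j + 1 + 4) := tau_of_mod _ hk2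
    have hperm : ∀ k, (tauPerm k : ℕ) = tau k := fun k => rfl
    have hδ : delta 4 1 y (4 * j + 1) = (2 : ℝ) ^ (4 * j + 1) - 2 ^ (4 * j + 1 + 4) := by
      show y (4 * j + 1) - y (4 * j + 1 + 4) = _
      simp only [hy, hperm, htau1, htau2]
      push_cast
      ring
    -- 4j+2 ≤ 2^(2j+1), hence (4j+2) * 2^(2j) ≤ 2^(4j+1)
    have hnat : (4 * j + 2) * 2 ^ (2 * j) ≤ 2 ^ (4 * j + 1) := by
      have h1 : 2 * j < 2 ^ (2 * j) := Nat.lt_two_pow_self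
      have h2 : 4 * j + 2 ≤ 2 ^ (2 * j + 1) := by
        rw [pow_succ]; omega
      calc (4 * j + 2) * 2 ^ (2 * j) ≤ 2 ^ (2 * j + 1) * 2 ^ (2 * j) :=
            Nat.mul_le_mul_right _ h2
        _ = 2 ^ (4 * j + 1) := by rw [← pow_add]; ring_nf
    have hnatR : ((4 * j + 2 : ℕ) : ℝ) * 2 ^ (2 * j) ≤ 2 ^ (4 * j + 1) := by
      exact_mod_cast hnat
    have habs : ((4 * j + 2 : ℕ) : ℝ) * 2 ^ (2 * j) ≤ |delta 4 1 y (4 * j + 1)| := by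
      rw [hδ, abs_sub_comm, abs_of_nonneg (by
        have : (2:ℝ) ^ (4 * j + 1) ≤ 2 ^ (4 * j + 1 + 4) :=
          pow_le_pow_right₀ (by norm_num) (by omega)
        linarith)]
      have h16 : (2:ℝ) ^ (4 * j + 1 + 4) = 16 * 2 ^ (4 * j + 1) := by
        rw [pow_add]; ring
      rw [h16]
      nlinarith [pow_pos (by norm_num : (0:ℝ) < 2) (4 * j + 1)]
    -- single term lower bound for the Cesàro average at i = 4j+1
    have hsum : ((4 * j + 2 : ℕ) : ℝ) * 2 ^ (2 * j) / ρ ≤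
        ∑ k ∈ Finset.range (4 * j + 1 + 1), |delta 4 1 y k| / ρ := by
      have hmem : 4 * j + 1 ∈ Finset.range (4 * j + 1 + 1) := Finset.self_mem_range_succ _
      calc ((4 * j + 2 : ℕ) : ℝ) * 2 ^ (2 * j) / ρ
          ≤ |delta 4 1 y (4 * j + 1)| / ρ := by gcongr
        _ ≤ ∑ k ∈ Finset.range (4 * j + 1 + 1), |delta 4 1 y k| / ρ :=
            Finset.single_le_sum (f := fun k => |delta 4 1 y k| / ρ)
              (fun k _ => by positivity) hmem
    have hces_ge : (2 : ℝ) ^ (2 * j) / ρ ≤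
        cesTerm (fun t => t) (delta 4 1 y) ρ (4 * j + 1) := by
      have hN : ((4 * j + 2 : ℕ) : ℝ) = ((4 * j + 1 : ℕ) : ℝ) + 1 := by push_cast; ring
      rw [hN] at hsum
      have hNpos : (0 : ℝ) < ((4 * j + 1 : ℕ) : ℝ) + 1 := by positivity
      have h2 := mul_le_mul_of_nonneg_left hsum (le_of_lt (one_div_pos.mpr hNpos))
      have h3 : (1 / (((4 * j + 1 : ℕ) : ℝ) + 1)) *
          ((((4 * j + 1 : ℕ) : ℝ) + 1) * 2 ^ (2 * j) / ρ) = 2 ^ (2 * j) / ρ := by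
        field_simp
      rw [h3] at h2
      exact h2
    have hle := le_trans hces_ge (hterm_le (4 * j + 1))
    calc (2 : ℝ) ^ (2 * j) = (2 ^ (2 * j) / ρ) * ρ := by field_simp
      _ ≤ C * ρ := mul_le_mul_of_nonneg_right hle hρ.le
  obtain ⟨n, hn⟩ := exists_nat_gt (C * ρ)
  have h2n : (n : ℝ) < 2 ^ (2 * n) := by
    have h1 := Nat.lt_two_pow_self (n := n)
    have h2 : (2:ℕ) ^ n ≤ 2 ^ (2 * n) := Nat.pow_le_pow_right (by norm_num) (by omega)
    exact_mod_cast lt_of_lt_of_le h1 h2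
  linarith [key n]

theorem CInftyDelta4_not_symmetric :
    ¬ SymmetricSet (CInftyMDelta (fun t => t) 4 1) ∧
    ∃ x ∈ CInftyMDelta (fun t => t) 4 1, ∃ π : Equiv.Perm ℕ,
      x = (fun k : ℕ => (k + 1 : ℝ)) ∧ (fun k => x (π k)) ∉ CInftyMDelta (fun t => t) 4 1 := by
  have hx : (fun k : ℕ => (k + 1 : ℝ)) ∈ CInftyMDelta (fun t => t) 4 1 := by
    refine ⟨1, one_pos, ?_⟩
    have hces : ∀ i, cesTerm (fun t => t) (delta 4 1 (fun k : ℕ => (k + 1 : ℝ))) 1 i = 4 := by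
      intro i
      have hd : ∀ k, delta 4 1 (fun k : ℕ => (k + 1 : ℝ)) k = -4 := by
        intro k
        show ((k : ℝ) + 1) - ((k + 4 : ℕ) + 1 : ℝ) = -4
        push_cast; ring
      simp only [cesTerm, hd]
      rw [Finset.sum_const, Finset.card_range]
      have hne : ((i : ℝ) + 1) ≠ 0 := by positivity
      have h4 : |(-4 : ℝ)| / 1 = 4 := by norm_num
      rw [h4, nsmul_eq_mul]
      field_simp
      exact Nat.cast_succ i
    have heq : cesSup (fun t => t) (delta 4 1 (fun k : ℕ => (k + 1 : ℝ))) 1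
        = ENNReal.ofReal 4 := by
      simp only [cesSup, hces, iSup_const]
    rw [heq]; exact ENNReal.ofReal_lt_top
  refine ⟨?_, (fun k : ℕ => (k + 1 : ℝ)), hx, tauPerm, rfl, rearranged_not_mem⟩
  intro hsym
  exact rearranged_not_mem (hsym _ hx tauPerm)
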